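/- Under the stated hypotheses, the sequence Λ_m converges uniformly on every bounded interval [T, B] as m → ∞, and the limit Λ : [T, ∞) → [0, ∞) is continuous and satisfies g(Φ(t) + Λ(t)) = Φ(t+1) + Λ(t+1) for all t ≥ T. -/

import Mathlib

open Filter

/-- The correction terms `Λ_m` built from `A` (the inverse of `g`) and the
auxiliary function `Φ`: `Λ_0 = 0` and `Λ_{m+1}(t) = A(Φ(t+1) + Λ_m(t+1)) − Φ(t)`. -/
noncomputable def LamSeq (A Φ : ℝ → ℝ) : ℕ → ℝ → ℝ
  | 0 => fun _ => 0
  | m + 1 => fun t => A (Φ (t + 1) + LamSeq A Φ m (t + 1)) - Φ t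

theorem LamSeq_tendstoUniformly_exists_Lambda
    (γ : ℝ) (hγ : 0 ≤ γ)
    (g : ℝ → ℝ) (hg_mono : StrictMono g) (hg_diff : Differentiable ℝ g)
    (hg_range : Set.range g = Set.Ioi γ)
    (hg_grow : ∀ x u : ℝ, 0 ≤ u → Real.exp u * g x ≤ g (x + u))
    (A : ℝ → ℝ)
    (hA_left : ∀ x : ℝ, A (g x) = x)
    (hA_right : ∀ s : ℝ, γ < s → g (A s) = s)
    (hA_diff : ∀ s : ℝ, γ < s → DifferentiableAt ℝ A s)
    (hA_deriv : ∀ s : ℝ, γ < s → 0 < deriv A s ∧ deriv A s ≤ 1 / s)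
    (T : ℝ) (hT : 0 < T) (lam : ℝ) (hlam : 1 < lam)
    (Φ : ℝ → ℝ) (hΦcont : ContinuousOn Φ (Set.Ici T))
    (hΦeq : ∀ t : ℝ, T ≤ t → Φ (t + 1) = Real.exp t * g (Φ t))
    (hΦlam : ∀ t : ℝ, T ≤ t → lam ≤ Φ t) :
    ∃ Λ : ℝ → ℝ,
      (∀ B : ℝ, TendstoUniformlyOn (fun m t => LamSeq A Φ m t) Λ atTop
        (Set.Icc T B)) ∧
      ContinuousOn Λ (Set.Ici T) ∧
      (∀ t : ℝ, T ≤ t → 0 ≤ Λ t) ∧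
      (∀ t : ℝ, T ≤ t → g (Φ t + Λ t) = Φ (t + 1) + Λ (t + 1)) := by
  -- Basic facts
  have hg_gt : ∀ x, γ < g x := by
    intro x
    have : g x ∈ Set.range g := Set.mem_range_self x
    rwa [hg_range] at this
  have hA_mono : ∀ {s s' : ℝ}, γ < s → γ < s' → s ≤ s' → A s ≤ A s' := by
    intro s s' hs hs' hss
    by_contra h
    push_neg at h
    have h2 := hg_mono h
    rw [hA_right s hs, hA_right s' hs'] at h2
    linarith
  have hAcont : ∀ s, γ < s → ContinuousAt A s := fun s hs => (hA_diff s hs).continuousAt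
  -- Lipschitz-type estimate for A
  have hLip : ∀ a b : ℝ, γ < a → a ≤ b → A b - A a ≤ (b - a) / a := by
    intro a b ha hab
    have ha0 : 0 < a := lt_of_le_of_lt hγ ha
    have hdiff : ∀ x ∈ Set.Icc a b, DifferentiableAt ℝ A x :=
      fun x hx => hA_diff x (lt_of_lt_of_le ha hx.1)
    have hbound : ∀ x ∈ Set.Icc a b, ‖deriv A x‖ ≤ 1 / a := by
      intro x hx
      have hx1 : γ < x := lt_of_lt_of_le ha hx.1
      obtain ⟨h1, h2⟩ := hA_deriv x hx1
      rw [Real.norm_of_nonneg h1.le]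
      calc deriv A x ≤ 1 / x := h2
        _ ≤ 1 / a := by
          apply one_div_le_one_div_of_le ha0 hx.1
    have hkey := Convex.norm_image_sub_le_of_norm_deriv_le hdiff hbound (convex_Icc a b)
      (Set.left_mem_Icc.2 hab) (Set.right_mem_Icc.2 hab)
    rw [Real.norm_eq_abs, Real.norm_eq_abs, abs_of_nonneg (by linarith : (0:ℝ) ≤ b - a)] at hkey
    have h3 : A b - A a ≤ |A b - A a| := le_abs_self _
    calc A b - A a ≤ 1 / a * (b - a) := by linarith
      _ = (b - a) / a := by ring
  have hexp1 : ∀ t : ℝ, T ≤ t → (1:ℝ) ≤ Real.exp t := by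
    intro t ht
    rw [← Real.exp_zero]
    exact Real.exp_le_exp.2 (by linarith)
  have hΦgt : ∀ t, T ≤ t → γ < Φ (t + 1) := by
    intro t ht
    have h1 : γ < g (Φ t) := hg_gt _
    have h3 : g (Φ t) ≤ Real.exp t * g (Φ t) :=
      le_mul_of_one_le_left (by linarith) (hexp1 t ht)
    rw [hΦeq t ht]; linarith
  have hlam0 : (0:ℝ) < lam := by linarith
  -- Main inductive estimates
  have main : ∀ m : ℕ, ∀ t, T ≤ t →
      0 ≤ LamSeq A Φ m t ∧ LamSeq A Φ m t ≤ LamSeq A Φ (m + 1) t ∧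
      LamSeq A Φ (m + 1) t - LamSeq A Φ m t ≤ (t + m) / lam ^ m := by
    intro m
    induction m with
    | zero =>
      intro t ht
      have ht1 : T ≤ t + 1 := by linarith
      have h1 : γ < g (Φ t) := hg_gt _
      have hΦ1 : γ < Φ (t + 1) := hΦgt t ht
      have hup : A (Φ (t + 1)) ≤ Φ t + t := by
        have hgrow := hg_grow (Φ t) t (by linarith)
        have h2 : γ < g (Φ t + t) := hg_gt _
        have h5 : A (Φ (t + 1)) ≤ A (g (Φ t + t)) :=
          hA_mono hΦ1 h2 (by rw [hΦeq t ht]; exact hgrow)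
        rwa [hA_left] at h5
      have hlo : Φ t ≤ A (Φ (t + 1)) := by
        have h3 : g (Φ t) ≤ Φ (t + 1) := by
          rw [hΦeq t ht]
          exact le_mul_of_one_le_left (by linarith) (hexp1 t ht)
        have := hA_mono h1 hΦ1 h3
        rwa [hA_left] at this
      refine ⟨le_refl 0, ?_, ?_⟩
      · show (0:ℝ) ≤ A (Φ (t + 1) + LamSeq A Φ 0 (t + 1)) - Φ t
        simp only [LamSeq, add_zero]
        linarith
      · show A (Φ (t + 1) + LamSeq A Φ 0 (t + 1)) - Φ t - 0 ≤ (t + (0:ℕ)) / lam ^ (0:ℕ)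
        simp only [LamSeq, add_zero, Nat.cast_zero, pow_zero, div_one, sub_zero]
        linarith
    | succ m ih =>
      intro t ht
      have ht1 : T ≤ t + 1 := by linarith
      obtain ⟨ih0, ih1, ih2⟩ := ih (t + 1) ht1
      obtain ⟨jh0, jh1, _⟩ := ih t ht
      have hΦ1 : γ < Φ (t + 1) := hΦgt t ht
      have hΦl : lam ≤ Φ (t + 1) := hΦlam (t + 1) ht1
      set a := Φ (t + 1) + LamSeq A Φ m (t + 1) with ha_def
      set b := Φ (t + 1) + LamSeq A Φ (m + 1) (t + 1) with hb_def
      have haγ : γ < a := lt_of_lt_of_le hΦ1 (le_add_of_nonneg_right ih0)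
      have hbγ : γ < b := lt_of_lt_of_le hΦ1 (le_add_of_nonneg_right (le_trans ih0 ih1))
      have hab : a ≤ b := by simp only [ha_def, hb_def]; linarith
      have hstep : A b - A a ≤ (t + 1 + m) / lam ^ m / lam := by
        have h1 := hLip a b haγ hab
        have h2 : b - a = LamSeq A Φ (m + 1) (t + 1) - LamSeq A Φ m (t + 1) := by
          simp only [ha_def, hb_def]; ring
        have hla : lam ≤ a := le_trans hΦl (le_add_of_nonneg_right ih0)
        have h3 : (b - a) / a ≤ (b - a) / lam := by
          gcongr
        have h4 : (b - a) / lam ≤ (t + 1 + m) / lam ^ m / lam := by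
          gcongr
          rw [h2]; exact ih2
        linarith
      have hAmono' : A a ≤ A b := hA_mono haγ hbγ hab
      refine ⟨le_trans jh0 jh1, ?_, ?_⟩
      · show A a - Φ t ≤ A b - Φ t
        linarith
      · show A b - Φ t - (A a - Φ t) ≤ (t + (↑(m + 1) : ℝ)) / lam ^ (m + 1)
        have heq : (t + (↑(m + 1) : ℝ)) / lam ^ (m + 1) = (t + 1 + m) / lam ^ m / lam := by
          rw [div_div, ← pow_succ]
          push_cast
          ring_nf
        rw [heq]
        linarith
  -- Continuity of each LamSeq m
  have hmap : Set.MapsTo (fun t : ℝ => t + 1) (Set.Ici T) (Set.Ici T) := by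
    intro t ht
    simp only [Set.mem_Ici] at *
    linarith
  have hshift : ContinuousOn (fun t : ℝ => t + 1) (Set.Ici T) :=
    (continuous_id.add continuous_const).continuousOn
  have cont : ∀ m : ℕ, ContinuousOn (LamSeq A Φ m) (Set.Ici T) := by
    intro m
    induction m with
    | zero => exact continuousOn_const
    | succ m ih =>
      have h1 : ContinuousOn (fun t => Φ (t + 1) + LamSeq A Φ m (t + 1)) (Set.Ici T) :=
        (hΦcont.comp hshift hmap).add (ih.comp hshift hmap)
      have h2 : ContinuousOn (fun t => A (Φ (t + 1) + LamSeq A Φ m (t + 1))) (Set.Ici T) := by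
        intro t ht
        have htT : T ≤ t := ht
        have hpos : γ < Φ (t + 1) + LamSeq A Φ m (t + 1) :=
          lt_of_lt_of_le (hΦgt t htT)
            (le_add_of_nonneg_right (main m (t + 1) (by linarith)).1)
        show ContinuousWithinAt (A ∘ fun t => Φ (t + 1) + LamSeq A Φ m (t + 1)) (Set.Ici T) t
        apply ContinuousAt.comp_continuousWithinAt _ (h1 t ht)
        exact hAcont _ hpos
      exact h2.sub hΦcont
  -- The telescoping series
  set f : ℕ → ℝ → ℝ := fun m t => LamSeq A Φ (m + 1) t - LamSeq A Φ m t with hf_def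
  set Λ : ℝ → ℝ := fun t => ∑' m, f m t with hΛ_def
  have hpartial : (fun m t => LamSeq A Φ m t) =
      fun N x => ∑ n ∈ Finset.range N, f n x := by
    funext N x
    rw [Finset.sum_range_sub (fun i => LamSeq A Φ i x)]
    simp [LamSeq]
  -- Uniform convergence on Icc T B
  have hU : ∀ B : ℝ, TendstoUniformlyOn (fun m t => LamSeq A Φ m t) Λ atTop (Set.Icc T B) := by
    intro B
    have hr0 : (0:ℝ) ≤ 1 / lam := by positivity
    have hr1 : 1 / lam < 1 := by
      rw [div_lt_one hlam0]; exact hlam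
    have hs1 : Summable (fun m : ℕ => (|B| + 1) * (1 / lam) ^ m) :=
      (summable_geometric_of_lt_one hr0 hr1).mul_left _
    have hs2 : Summable (fun m : ℕ => (m : ℝ) * (1 / lam) ^ m) := by
      have := summable_pow_mul_geometric_of_norm_lt_one (R := ℝ) 1
        (r := 1 / lam) (by rw [Real.norm_eq_abs, abs_of_nonneg hr0]; exact hr1)
      simpa using this
    have hsum : Summable (fun m : ℕ => (|B| + 1 + m) * (1 / lam) ^ m) := by
      have : (fun m : ℕ => (|B| + 1 + m) * (1 / lam) ^ m) =
          fun m : ℕ => (|B| + 1) * (1 / lam) ^ m + (m : ℝ) * (1 / lam) ^ m := by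
        funext m; ring
      rw [this]
      exact hs1.add hs2
    have hbd : ∀ n : ℕ, ∀ x ∈ Set.Icc T B, ‖f n x‖ ≤ (|B| + 1 + n) * (1 / lam) ^ n := by
      intro n x hx
      obtain ⟨h0, h1, h2⟩ := main n x hx.1
      have hfeq : f n x = LamSeq A Φ (n + 1) x - LamSeq A Φ n x := rfl
      rw [hfeq, Real.norm_of_nonneg (by linarith)]
      have hxB : x ≤ |B| := le_trans hx.2 (le_abs_self B)
      calc LamSeq A Φ (n + 1) x - LamSeq A Φ n x ≤ (x + n) / lam ^ n := h2
        _ ≤ (|B| + 1 + n) / lam ^ n := by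
            gcongr
            linarith
        _ = (|B| + 1 + n) * (1 / lam) ^ n := by
            rw [one_div, inv_pow, div_eq_mul_inv]
    rw [hpartial]
    exact tendstoUniformlyOn_tsum_nat hsum hbd
  -- Pointwise convergence
  have hpt : ∀ t, T ≤ t → Tendsto (fun m => LamSeq A Φ m t) atTop (nhds (Λ t)) := by
    intro t ht
    exact (hU t).tendsto_at ⟨ht, le_refl t⟩
  -- Nonnegativity
  have hnn : ∀ t, T ≤ t → 0 ≤ Λ t := by
    intro t ht
    exact ge_of_tendsto (hpt t ht) (Eventually.of_forall fun m => (main m t ht).1)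
  -- Continuity of Λ
  have hΛcont : ContinuousOn Λ (Set.Ici T) := by
    intro t ht
    have htT : T ≤ t := ht
    have h1 : ContinuousOn Λ (Set.Icc T (t + 1)) :=
      (hU (t + 1)).continuousOn
        (Frequently.of_forall fun m => (cont m).mono Set.Icc_subset_Ici_self)
    have h2 : ContinuousWithinAt Λ (Set.Icc T (t + 1)) t :=
      h1 t ⟨htT, by linarith⟩
    apply h2.mono_of_mem_nhdsWithin
    have h3 : Set.Ici T ∩ Set.Iio (t + 1) ∈ nhdsWithin t (Set.Ici T) :=
      inter_mem_nhdsWithin _ (Iio_mem_nhds (by linarith))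
    apply Filter.mem_of_superset h3
    intro x hx
    exact ⟨hx.1, le_of_lt hx.2⟩
  -- Functional equation
  have hfun : ∀ t, T ≤ t → g (Φ t + Λ t) = Φ (t + 1) + Λ (t + 1) := by
    intro t ht
    have ht1 : T ≤ t + 1 := by linarith
    have hγs : γ < Φ (t + 1) + Λ (t + 1) :=
      lt_of_lt_of_le (hΦgt t ht) (le_add_of_nonneg_right (hnn (t + 1) ht1))
    have h1 : Tendsto (fun m => LamSeq A Φ (m + 1) t) atTop (nhds (Λ t)) :=
      (hpt t ht).comp (Filter.tendsto_add_atTop_nat 1)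
    have h2 : Tendsto (fun m => Φ (t + 1) + LamSeq A Φ m (t + 1)) atTop
        (nhds (Φ (t + 1) + Λ (t + 1))) :=
      tendsto_const_nhds.add (hpt (t + 1) ht1)
    have h3 : Tendsto (fun m => A (Φ (t + 1) + LamSeq A Φ m (t + 1)) - Φ t) atTop
        (nhds (A (Φ (t + 1) + Λ (t + 1)) - Φ t)) :=
      (((hAcont _ hγs).tendsto.comp h2).sub tendsto_const_nhds)
    have h4 : (fun m => LamSeq A Φ (m + 1) t) =
        fun m => A (Φ (t + 1) + LamSeq A Φ m (t + 1)) - Φ t := by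
      funext m; rfl
    rw [h4] at h1
    have h5 : Λ t = A (Φ (t + 1) + Λ (t + 1)) - Φ t := tendsto_nhds_unique h1 h3
    have h6 : Φ t + Λ t = A (Φ (t + 1) + Λ (t + 1)) := by linarith
    rw [h6, hA_right _ hγs]
  exact ⟨Λ, hU, hΛcont, hnn, hfun⟩
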